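/- Let n ≥ 2 and let A_n denote the alternating group of even permutations of Fin n. Let λ, μ : Fin n → ℤ be strictly decreasing integer vectors (λ 0 > λ 1 > ⋯ > λ (n−1) and likewise for μ). Then ∫_{[0,1]^n} Ê_λ(x) · conj(Ê_μ(x)) dx = (n!/2) if λ = μ and 0 otherwise, where the integral is with respect to Lebesgue measure on the unit cube; that is, E-orbit functions attached to distinct strictly dominant integral weights are orthogonal, with squared norm equal to the order n!/2 of the even Weyl group. -/

import Mathlib

set_option linter.deprecated false

open MeasureTheory Complex intervalIntegral

lemma int_one (k : ℤ) :
    ∫ x in Set.Icc (0:ℝ) 1, Complex.exp (2 * (Real.pi:ℂ) * Complex.I * (k:ℂ) * (x:ℂ))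
      = if k = 0 then 1 else 0 := by
  by_cases hk : k = 0
  · simp [hk, Real.volume_Icc]
  · have hc : (2 * (Real.pi:ℂ) * Complex.I * (k:ℂ)) ≠ 0 := by
      apply mul_ne_zero
      apply mul_ne_zero
      apply mul_ne_zero
      · norm_num
      · exact_mod_cast Real.pi_ne_zero
      · exact Complex.I_ne_zero
      · exact_mod_cast hk
    rw [MeasureTheory.integral_Icc_eq_integral_Ioc,
      ← intervalIntegral.integral_of_le (zero_le_one)]
    rw [integral_exp_mul_complex hc]
    have h1 : (2 * (Real.pi:ℂ) * Complex.I * (k:ℂ)) * (1:ℝ) = (k:ℂ) * (2 * Real.pi * Complex.I) := by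
      push_cast; ring
    rw [h1, Complex.exp_int_mul_two_pi_mul_I]
    simp [hk]

lemma int_cube (n : ℕ) (k : Fin n → ℤ) :
    ∫ x in Set.univ.pi (fun _ : Fin n => Set.Icc (0 : ℝ) 1),
      Complex.exp (2 * (Real.pi : ℂ) * Complex.I * ((∑ i, (k i : ℝ) * x i : ℝ) : ℂ))
      = if k = 0 then 1 else 0 := by
  have hms : MeasurableSet (Set.univ.pi (fun _ : Fin n => Set.Icc (0 : ℝ) 1)) :=
    MeasurableSet.univ_pi (fun _ => measurableSet_Icc)
  rw [← MeasureTheory.integral_indicator hms]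
  have key : ∀ x : Fin n → ℝ,
      (Set.univ.pi (fun _ : Fin n => Set.Icc (0 : ℝ) 1)).indicator
        (fun x => Complex.exp (2 * (Real.pi : ℂ) * Complex.I *
          ((∑ i, (k i : ℝ) * x i : ℝ) : ℂ))) x
      = ∏ i, (Set.Icc (0:ℝ) 1).indicator
          (fun t => Complex.exp (2 * (Real.pi:ℂ) * Complex.I * (k i : ℂ) * (t:ℂ))) (x i) := by
    intro x
    by_cases hx : x ∈ Set.univ.pi (fun _ : Fin n => Set.Icc (0 : ℝ) 1)
    · rw [Set.indicator_of_mem hx]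
      have : ∀ i, (Set.Icc (0:ℝ) 1).indicator
          (fun t => Complex.exp (2 * (Real.pi:ℂ) * Complex.I * (k i : ℂ) * (t:ℂ))) (x i)
          = Complex.exp (2 * (Real.pi:ℂ) * Complex.I * (k i : ℂ) * (x i : ℂ)) := fun i =>
        Set.indicator_of_mem (hx i (Set.mem_univ i)) _
      rw [Finset.prod_congr rfl (fun i _ => this i), ← Complex.exp_sum]
      congr 1
      push_cast
      rw [Finset.mul_sum]
      exact Finset.sum_congr rfl (fun i _ => by ring)
    · rw [Set.indicator_of_notMem hx]
      rw [Set.mem_univ_pi] at hx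
      push_neg at hx
      obtain ⟨i, hi⟩ := hx
      exact (Finset.prod_eq_zero (Finset.mem_univ i) (Set.indicator_of_notMem hi _)).symm
  simp_rw [key]
  rw [MeasureTheory.integral_fintype_prod_volume_eq_prod (ι := Fin n)
    (f := fun i => (Set.Icc (0:ℝ) 1).indicator
      (fun t => Complex.exp (2 * (Real.pi:ℂ) * Complex.I * (k i : ℂ) * (t:ℂ))))]
  have : ∀ i, ∫ t : ℝ, (Set.Icc (0:ℝ) 1).indicator
      (fun t => Complex.exp (2 * (Real.pi:ℂ) * Complex.I * (k i : ℂ) * (t:ℂ))) t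
      = if k i = 0 then 1 else 0 := by
    intro i
    rw [MeasureTheory.integral_indicator measurableSet_Icc]
    exact int_one (k i)
  rw [Finset.prod_congr rfl (fun i _ => this i)]
  by_cases hk : k = 0
  · simp [hk]
  · obtain ⟨i, hi⟩ := Function.ne_iff.mp hk
    rw [Finset.prod_eq_zero (Finset.mem_univ i) (by simp [show k i ≠ 0 by simpa using hi]), if_neg hk]

lemma comb (n : ℕ) (lam mu : Fin n → ℤ)
    (hlam : ∀ i j : Fin n, i < j → lam j < lam i)
    (hmu : ∀ i j : Fin n, i < j → mu j < mu i)
    (σ τ : Equiv.Perm (Fin n)) (h : ∀ i, lam (σ⁻¹ i) = mu (τ⁻¹ i)) :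
    lam = mu ∧ σ = τ := by
  have hm : StrictAnti mu := fun a b hab => hmu a b hab
  set π : Fin n → Fin n := fun j => τ⁻¹ (σ j) with hπdef
  have hπ : ∀ j, lam j = mu (π j) := fun j => by simpa [hπdef] using h (σ j)
  have hmono : StrictMono π := by
    intro a b hab
    have hlt := hlam a b hab
    rw [hπ a, hπ b] at hlt
    exact hm.lt_iff_gt.mp hlt
  have hsurj : Function.Surjective π := fun j => ⟨σ⁻¹ (τ j), by simp [hπdef]⟩
  have hπid : π = id := by
    have hr : Set.range π = Set.range (id : Fin n → Fin n) := by
      rw [Set.range_eq_univ.mpr hsurj, Set.range_id]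
    exact (hmono.range_inj strictMono_id).mp hr
  have hst : σ = τ := Equiv.ext fun j => by
    have h1 := congrFun hπid j
    simp only [hπdef, id] at h1
    simpa using congrArg τ h1
  refine ⟨funext fun j => ?_, hst⟩
  rw [hπ j, hπid]
  rfl


/-- The normalized `E`-orbit function
`Ê_λ(x) = ∑_{σ ∈ Aₙ} exp(2πi ∑ᵢ λ(σ⁻¹ i) · x i)`. -/
noncomputable def Ehat (n : ℕ) (lam x : Fin n → ℝ) : ℂ :=
  ∑ σ : alternatingGroup (Fin n),
    Complex.exp (2 * (Real.pi : ℂ) * Complex.I *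
      ((∑ i, lam ((σ : Equiv.Perm (Fin n))⁻¹ i) * x i : ℝ) : ℂ))

/-- `E`-orbit functions attached to distinct strictly dominant integral weights are
orthogonal over the unit cube, with squared norm the order `n!/2` of the even Weyl
group. -/
theorem Ehat_orthogonality_strict (n : ℕ) (hn : 2 ≤ n) (lam mu : Fin n → ℤ)
    (hlam : ∀ i j : Fin n, i < j → lam j < lam i)
    (hmu : ∀ i j : Fin n, i < j → mu j < mu i) :
    ∫ x in Set.univ.pi (fun _ : Fin n => Set.Icc (0 : ℝ) 1),
        Ehat n (fun i => (lam i : ℝ)) x *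
          (starRingEnd ℂ) (Ehat n (fun i => (mu i : ℝ)) x) =
      if lam = mu then (n.factorial : ℂ) / 2 else 0 := by
  classical
  have key : ∀ x : Fin n → ℝ,
      Ehat n (fun i => (lam i : ℝ)) x * (starRingEnd ℂ) (Ehat n (fun i => (mu i : ℝ)) x)
      = ∑ σ : alternatingGroup (Fin n), ∑ τ : alternatingGroup (Fin n),
          Complex.exp (2 * (Real.pi:ℂ) * Complex.I *
            ((∑ i, ((lam ((σ:Equiv.Perm (Fin n))⁻¹ i) - mu ((τ:Equiv.Perm (Fin n))⁻¹ i) : ℤ) : ℝ)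
              * x i : ℝ) : ℂ)) := by
    intro x
    rw [Ehat, Ehat, map_sum, Finset.sum_mul_sum]
    refine Finset.sum_congr rfl fun σ _ => Finset.sum_congr rfl fun τ _ => ?_
    rw [← Complex.exp_conj, ← Complex.exp_add]
    congr 1
    have hsub : ((∑ i, ((lam ((σ:Equiv.Perm (Fin n))⁻¹ i)
          - mu ((τ:Equiv.Perm (Fin n))⁻¹ i) : ℤ) : ℝ) * x i : ℝ) : ℂ)
        = ((∑ i, ((lam ((σ:Equiv.Perm (Fin n))⁻¹ i) : ℝ)) * x i : ℝ) : ℂ)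
          - ((∑ i, ((mu ((τ:Equiv.Perm (Fin n))⁻¹ i) : ℝ)) * x i : ℝ) : ℂ) := by
      push_cast
      rw [← Finset.sum_sub_distrib]
      exact Finset.sum_congr rfl fun i _ => by ring
    rw [hsub]
    simp only [map_mul, Complex.conj_I, Complex.conj_ofReal, map_ofNat]
    ring
  simp_rw [key]
  have hcompact : IsCompact (Set.univ.pi (fun _ : Fin n => Set.Icc (0 : ℝ) 1)) :=
    isCompact_univ_pi (fun _ => isCompact_Icc)
  have hint : ∀ c : Fin n → ℤ, MeasureTheory.IntegrableOn
      (fun x : Fin n → ℝ => Complex.exp (2 * (Real.pi:ℂ) * Complex.I *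
        ((∑ i, (c i : ℝ) * x i : ℝ) : ℂ)))
      (Set.univ.pi (fun _ : Fin n => Set.Icc (0 : ℝ) 1)) := by
    intro c
    apply ContinuousOn.integrableOn_compact hcompact
    apply Continuous.continuousOn
    fun_prop
  rw [MeasureTheory.integral_finset_sum _ (fun σ _ => MeasureTheory.integrable_finset_sum _
    (fun τ _ => hint _))]
  have : ∀ σ : alternatingGroup (Fin n),
      (∫ x in Set.univ.pi (fun _ : Fin n => Set.Icc (0 : ℝ) 1),
        ∑ τ : alternatingGroup (Fin n),
          Complex.exp (2 * (Real.pi:ℂ) * Complex.I *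
            ((∑ i, ((lam ((σ:Equiv.Perm (Fin n))⁻¹ i) - mu ((τ:Equiv.Perm (Fin n))⁻¹ i) : ℤ) : ℝ)
              * x i : ℝ) : ℂ)))
      = ∑ τ : alternatingGroup (Fin n),
          if (lam = mu ∧ σ = τ) then (1:ℂ) else 0 := by
    intro σ
    rw [MeasureTheory.integral_finset_sum _ (fun τ _ => hint _)]
    refine Finset.sum_congr rfl fun τ _ => ?_
    rw [int_cube n (fun i => lam ((σ:Equiv.Perm (Fin n))⁻¹ i) - mu ((τ:Equiv.Perm (Fin n))⁻¹ i))]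
    congr 1
    rw [eq_iff_iff]
    constructor
    · intro h
      have h' : ∀ i, lam ((σ:Equiv.Perm (Fin n))⁻¹ i) = mu ((τ:Equiv.Perm (Fin n))⁻¹ i) :=
        fun i => sub_eq_zero.mp (congrFun h i)
      obtain ⟨h1, h2⟩ := comb n lam mu hlam hmu _ _ h'
      exact ⟨h1, Subtype.ext h2⟩
    · rintro ⟨rfl, rfl⟩
      funext i
      simp
  rw [Finset.sum_congr rfl (fun σ _ => this σ)]
  by_cases hlm : lam = mu
  · simp only [hlm, true_and, if_pos]
    have hinner : ∀ σ : alternatingGroup (Fin n),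
        (∑ τ : alternatingGroup (Fin n), if σ = τ then (1:ℂ) else 0) = 1 := fun σ => by
      rw [Finset.sum_ite_eq Finset.univ σ (fun _ => (1:ℂ)) ]
      simp
    rw [Finset.sum_congr rfl (fun σ _ => hinner σ), Finset.sum_const, Finset.card_univ,
      nsmul_eq_mul, mul_one]
    haveI : Nontrivial (Fin n) := ⟨⟨⟨0, by omega⟩, ⟨1, by omega⟩, by simp [Fin.ext_iff]⟩⟩
    have h2 : 2 * Fintype.card (alternatingGroup (Fin n)) = n.factorial := by
      rw [two_mul_card_alternatingGroup, Fintype.card_perm, Fintype.card_fin]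
    have h2' : (2:ℂ) * (Fintype.card (alternatingGroup (Fin n)) : ℂ) = (n.factorial : ℂ) := by
      exact_mod_cast congrArg (Nat.cast : ℕ → ℂ) h2
    rw [eq_div_iff (two_ne_zero)]
    linear_combination h2'
  · simp [hlm]
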